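/- (Abstract localized potentials / range non-inclusion.) Let X, Y₁, Y₂ be Hilbert spaces and A : Y₁ → X, B : Y₂ → X bounded linear operators. If the range of A is not contained in the range of B, then there exists a sequence (g_n) in X such that ‖A* g_n‖ → ∞ and ‖B* g_n‖ → 0, where A*, B* denote the Hilbert adjoints. -/
import Mathlib

open Filter Topology ContinuousLinearMap

local notation "⟪" x ", " y "⟫" => @inner ℝ _ _ x y

lemma aux_range_sub {X Y₁ Y₂ : Type*}
    [NormedAddCommGroup X] [InnerProductSpace ℝ X] [CompleteSpace X]
    [NormedAddCommGroup Y₁] [InnerProductSpace ℝ Y₁] [CompleteSpace Y₁]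
    [NormedAddCommGroup Y₂] [InnerProductSpace ℝ Y₂] [CompleteSpace Y₂]
    (A : Y₁ →L[ℝ] X) (B : Y₂ →L[ℝ] X) (C : ℝ)
    (hC : ∀ x : X, ‖adjoint A x‖ ≤ C * ‖adjoint B x‖) :
    Set.range A ⊆ Set.range B := by
  rintro _ ⟨y, rfl⟩
  set A' := adjoint A
  set B' := adjoint B
  -- well-definedness
  have welldef : ∀ x x' : X, B' x = B' x' → ⟪x, A y⟫ = ⟪x', A y⟫ := by
    intro x x' h
    have h0 : A' (x - x') = 0 := by
      have hb : B' (x - x') = 0 := by simp [map_sub, h]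
      have := hC (x - x')
      rw [hb] at this
      simp only [norm_zero, mul_zero] at this
      exact norm_le_zero_iff.mp this
    have : ⟪A' (x - x'), y⟫ = ⟪x - x', A y⟫ := ContinuousLinearMap.adjoint_inner_left A y (x - x')
    rw [h0] at this
    simp only [inner_zero_left] at this
    have := this.symm
    rw [inner_sub_left] at this
    linarith
  set S : Submodule ℝ Y₂ := LinearMap.range (B' : X →ₗ[ℝ] Y₂) with hS
  have memS : ∀ s : S, ∃ x : X, B' x = (s : Y₂) := fun s => LinearMap.mem_range.mp s.2
  classical
  set f : S → ℝ := fun s => ⟪(memS s).choose, A y⟫ with hf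
  have fspec : ∀ (s : S) (x : X), B' x = (s : Y₂) → f s = ⟪x, A y⟫ := by
    intro s x hx
    exact welldef _ _ ((memS s).choose_spec.trans hx.symm)
  have φadd : ∀ s t : S, f (s + t) = f s + f t := by
    intro s t
    obtain ⟨xs, hxs⟩ := memS s
    obtain ⟨xt, hxt⟩ := memS t
    rw [fspec s xs hxs, fspec t xt hxt, fspec (s + t) (xs + xt) (by simp [map_add, hxs, hxt]),
      inner_add_left]
  have φsmul : ∀ (c : ℝ) (s : S), f (c • s) = c * f s := by
    intro c s
    obtain ⟨xs, hxs⟩ := memS s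
    rw [fspec s xs hxs, fspec (c • s) (c • xs) (by simp [map_smul, hxs]),
      real_inner_smul_left]
  set φ : S →ₗ[ℝ] ℝ :=
    { toFun := f, map_add' := φadd, map_smul' := φsmul } with hφ
  have hbd : ∀ s : S, ‖φ s‖ ≤ (C * ‖y‖) * ‖s‖ := by
    intro s
    obtain ⟨xs, hxs⟩ := memS s
    have h1 : φ s = ⟪A' xs, y⟫ := by
      rw [hφ]
      simp only [LinearMap.coe_mk, AddHom.coe_mk]
      rw [fspec s xs hxs]
      exact (ContinuousLinearMap.adjoint_inner_left A y xs).symm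
    rw [h1]
    calc ‖⟪A' xs, y⟫‖ ≤ ‖A' xs‖ * ‖y‖ := norm_inner_le_norm _ _
      _ ≤ (C * ‖B' xs‖) * ‖y‖ := by
          apply mul_le_mul_of_nonneg_right (hC xs) (norm_nonneg _)
      _ = (C * ‖y‖) * ‖(s : Y₂)‖ := by rw [hxs]; ring
      _ = (C * ‖y‖) * ‖s‖ := rfl
  set φc : S →L[ℝ] ℝ := LinearMap.mkContinuous φ (C * ‖y‖) hbd with hφc
  obtain ⟨g, hg, -⟩ := exists_extension_norm_eq S φc
  set z : Y₂ := (InnerProductSpace.toDual ℝ Y₂).symm g with hz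
  have hzv : ∀ v : Y₂, ⟪z, v⟫ = g v := by
    intro v
    rw [hz]
    exact InnerProductSpace.toDual_symm_apply
  refine ⟨z, ?_⟩
  apply ext_inner_left ℝ
  intro v
  have h1 : ⟪v, B z⟫ = ⟪B' v, z⟫ := (ContinuousLinearMap.adjoint_inner_left B z v).symm
  have hmem : B' v ∈ S := LinearMap.mem_range.mpr ⟨v, rfl⟩
  have h2 : ⟪B' v, z⟫ = g (B' v) := by rw [real_inner_comm]; exact hzv _
  have h3 : g (B' v) = φc ⟨B' v, hmem⟩ := hg ⟨B' v, hmem⟩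
  have h4 : φc (⟨B' v, hmem⟩ : S) = ⟪v, A y⟫ := fspec ⟨B' v, hmem⟩ v rfl
  rw [h1, h2, h3, h4]

theorem stmt_13 {X Y₁ Y₂ : Type*}
    [NormedAddCommGroup X] [InnerProductSpace ℝ X] [CompleteSpace X]
    [NormedAddCommGroup Y₁] [InnerProductSpace ℝ Y₁] [CompleteSpace Y₁]
    [NormedAddCommGroup Y₂] [InnerProductSpace ℝ Y₂] [CompleteSpace Y₂]
    (A : Y₁ →L[ℝ] X) (B : Y₂ →L[ℝ] X)
    (hrange : ¬ (Set.range A ⊆ Set.range B)) :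
    ∃ g : ℕ → X,
      Tendsto (fun n => ‖ContinuousLinearMap.adjoint A (g n)‖) atTop atTop ∧
      Tendsto (fun n => ‖ContinuousLinearMap.adjoint B (g n)‖) atTop (𝓝 0) := by
  classical
  set A' := adjoint A
  set B' := adjoint B
  have hx : ∀ n : ℕ, ∃ x : X, ((n : ℝ) + 1) ^ 2 * ‖B' x‖ < ‖A' x‖ := by
    intro n
    by_contra hcon
    push_neg at hcon
    exact hrange (aux_range_sub A B (((n : ℝ) + 1) ^ 2) hcon)
  choose x hxlt using hx
  have hAne : ∀ n, ‖A' (x n)‖ ≠ 0 := by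
    intro n
    have := hxlt n
    have h0 : 0 ≤ ((n : ℝ) + 1) ^ 2 * ‖B' (x n)‖ := by positivity
    exact (lt_of_le_of_lt h0 this).ne'
  set g : ℕ → X := fun n => (((n : ℝ) + 1) / ‖A' (x n)‖) • x n with hg
  have hAg : ∀ n, ‖A' (g n)‖ = (n : ℝ) + 1 := by
    intro n
    rw [hg]
    simp only [map_smul, norm_smul, norm_div, Real.norm_eq_abs, abs_norm]
    rw [abs_of_nonneg (by positivity : (0:ℝ) ≤ (n : ℝ) + 1)]
    exact div_mul_cancel₀ _ (hAne n)
  have hBg : ∀ n, ‖B' (g n)‖ ≤ 1 / ((n : ℝ) + 1) := by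
    intro n
    rw [hg]
    simp only [map_smul, norm_smul, norm_div, Real.norm_eq_abs, abs_norm]
    rw [abs_of_nonneg (by positivity : (0:ℝ) ≤ (n : ℝ) + 1)]
    have hA : 0 < ‖A' (x n)‖ := lt_of_le_of_ne (norm_nonneg _) (Ne.symm (hAne n))
    rw [div_mul_eq_mul_div, div_le_div_iff₀ hA (by positivity : (0:ℝ) < (n : ℝ) + 1)]
    have := (hxlt n).le
    calc ((n : ℝ) + 1) * ‖B' (x n)‖ * ((n : ℝ) + 1)
        = ((n : ℝ) + 1) ^ 2 * ‖B' (x n)‖ := by ring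
      _ ≤ ‖A' (x n)‖ := this
      _ = 1 * ‖A' (x n)‖ := (one_mul _).symm
  refine ⟨g, ?_, ?_⟩
  · have : Tendsto (fun n : ℕ => (n : ℝ) + 1) atTop atTop :=
      tendsto_atTop_add_const_right _ 1 tendsto_natCast_atTop_atTop
    exact this.congr (fun n => (hAg n).symm)
  · have h0 : Tendsto (fun n : ℕ => 1 / ((n : ℝ) + 1)) atTop (𝓝 0) :=
      tendsto_one_div_add_atTop_nhds_zero_nat
    exact squeeze_zero (fun n => norm_nonneg _) hBg h0
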